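/- The quad-equation of type III for system (dRTL+ m), (h−α)λ(XY+UV) − h(λ²+α)XU − (λ²+h)XV + α(λ²+h)YU + (λ²+α)YV = 0 with (V,Y,U,X) = (e^{x_k}, Ψ_{k+1}, e^{x̲_{k+1}}, Φ_{k+1}), is equivalent (for nonzero denominators) to its three-leg form centered at x_k: ((1+αe^{x̲_{k+1}−x_k})/(1+he^{x̲_{k+1}−x_k}))·((e^{x_k}−λΨ_{k+1})/(λe^{x_k}+αΨ_{k+1}))·((λe^{x_k}+hΦ_{k+1})/(e^{x_k}−λΦ_{k+1})) = 1. -/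
import Mathlib


/-- The quad-equation of type III for system (dRTL+ m),
`(h−α)λ(XY+UV) − h(λ²+α)XU − (λ²+h)XV + α(λ²+h)YU + (λ²+α)YV = 0`
with `(V,Y,U,X) = (e^{x_k}, Ψ_{k+1}, e^{x̲_{k+1}}, Φ_{k+1})`,
is equivalent to its three-leg form centered at `x_k`.
Here `Ex = e^{x_k}` and `Eu = e^{x̲_{k+1}}`. -/
theorem dRTLm_typeIII_three_leg_form
    (α h lam Ex Eu Ψ Φ : ℂ)
    (hEx : Ex ≠ 0) (hEu : Eu ≠ 0)
    (hd1 : 1 + h * (Eu / Ex) ≠ 0)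
    (hd2 : lam * Ex + α * Ψ ≠ 0)
    (hd3 : Ex - lam * Φ ≠ 0) :
    ((h - α) * lam * (Φ * Ψ + Eu * Ex) - h * (lam ^ 2 + α) * Φ * Eu -
        (lam ^ 2 + h) * Φ * Ex + α * (lam ^ 2 + h) * Ψ * Eu +
        (lam ^ 2 + α) * Ψ * Ex = 0)
      ↔
    ((1 + α * (Eu / Ex)) / (1 + h * (Eu / Ex))) *
    ((Ex - lam * Ψ) / (lam * Ex + α * Ψ)) *
    ((lam * Ex + h * Φ) / (Ex - lam * Φ)) = 1 := by
  rw [div_mul_div_comm, div_mul_div_comm,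
    div_eq_one_iff_eq (mul_ne_zero (mul_ne_zero hd1 hd2) hd3)]
  have e1 : 1 + α * (Eu / Ex) = (Ex + α * Eu) / Ex := by field_simp
  have e2 : 1 + h * (Eu / Ex) = (Ex + h * Eu) / Ex := by field_simp
  rw [e1, e2]
  constructor <;> intro H
  · field_simp
    linear_combination (-Ex) * H
  · have H' : (Ex + α * Eu) * (Ex - lam * Ψ) * (lam * Ex + h * Φ)
        = (Ex + h * Eu) * (lam * Ex + α * Ψ) * (Ex - lam * Φ) := by
      field_simp at H
      linear_combination H
    have h2 : Ex * ((h - α) * lam * (Φ * Ψ + Eu * Ex) - h * (lam ^ 2 + α) * Φ * Eu -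
        (lam ^ 2 + h) * Φ * Ex + α * (lam ^ 2 + h) * Ψ * Eu +
        (lam ^ 2 + α) * Ψ * Ex) = 0 := by linear_combination -H'
    exact (mul_eq_zero.mp h2).resolve_left hEx
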